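/- Let K be a simplicial complex on [m] and R_K the quotient of the algebra R (with relations u_i t_i = u_i, t_i u_i = 0, u_i t_j = t_j u_i, t_i² = t_i, u_i² = 0, u_i u_j = −u_j u_i, t_i t_j = t_j t_i) by the ideal generated by u_σ for σ ∉ K, with differential d t_i = u_i, d u_i = 0 extended by the Leibniz rule. Then the Z-linear map sending the basis cochain σ* ∈ C̃*(K_ω) to u_σ t_{ω∖σ}, summed over all ω ⊆ [m], is a degree-one-shifting isomorphism of cochain complexes ⊕_{ω⊆[m]} C̃*(K_ω) → R_K, where C̃*(K_ω) is the augmented simplicial cochain complex of the full subcomplex K_ω. -/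

import Mathlib

open Finset
open scoped Classical

noncomputable section

abbrev FA (m : ℕ) := FreeAlgebra ℤ (Fin m ⊕ Fin m)

def uf (m : ℕ) (i : Fin m) : FA m := FreeAlgebra.ι ℤ (Sum.inl i)
def tf (m : ℕ) (i : Fin m) : FA m := FreeAlgebra.ι ℤ (Sum.inr i)

def ufProd (m : ℕ) (σ : Finset (Fin m)) : FA m :=
  ((σ.sort (· ≤ ·)).map (uf m)).prod

/-- The defining relations of the DGA `R_K`. -/
inductive RKRel (m : ℕ) (K : Finset (Fin m) → Prop) : FA m → FA m → Prop
  | ut_same (i : Fin m) : RKRel m K (uf m i * tf m i) (uf m i)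
  | tu_same (i : Fin m) : RKRel m K (tf m i * uf m i) 0
  | ut_comm {i j : Fin m} (h : i ≠ j) : RKRel m K (uf m i * tf m j) (tf m j * uf m i)
  | tt_same (i : Fin m) : RKRel m K (tf m i * tf m i) (tf m i)
  | uu_same (i : Fin m) : RKRel m K (uf m i * uf m i) 0
  | uu_anti {i j : Fin m} (h : i ≠ j) : RKRel m K (uf m i * uf m j) (-(uf m j * uf m i))
  | tt_comm (i j : Fin m) : RKRel m K (tf m i * tf m j) (tf m j * tf m i)
  | notface (σ : Finset (Fin m)) (h : ¬ K σ) : RKRel m K (ufProd m σ) 0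

abbrev RK (m : ℕ) (K : Finset (Fin m) → Prop) := RingQuot (RKRel m K)

def uqK (m : ℕ) (K : Finset (Fin m) → Prop) (i : Fin m) : RK m K :=
  RingQuot.mkRingHom (RKRel m K) (uf m i)
def tqK (m : ℕ) (K : Finset (Fin m) → Prop) (i : Fin m) : RK m K :=
  RingQuot.mkRingHom (RKRel m K) (tf m i)

def uProdK (m : ℕ) (K : Finset (Fin m) → Prop) (σ : Finset (Fin m)) : RK m K :=
  ((σ.sort (· ≤ ·)).map (uqK m K)).prod
def tProdK (m : ℕ) (K : Finset (Fin m) → Prop) (τ : Finset (Fin m)) : RK m K :=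
  ((τ.sort (· ≤ ·)).map (tqK m K)).prod

/-- The span of the monomials `u_σ t_τ` with `|σ| = k`: the degree-`k` part of `R_K`. -/
def degreePart (m : ℕ) (K : Finset (Fin m) → Prop) (k : ℕ) : Submodule ℤ (RK m K) :=
  Submodule.span ℤ
    {z | ∃ σ τ : Finset (Fin m), σ.card = k ∧ z = uProdK m K σ * tProdK m K τ}

/-- Index set for the basis of `⊕_{ω⊆[m]} C̃*(K_ω)`: pairs `(σ, ω)` with `σ ∈ K`
(possibly `σ = ∅`) and `σ ⊆ ω ⊆ [m]`; the generator `(σ, ω)` is the dual basis cochain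
`σ* ∈ C̃^{|σ|−1}(K_ω)`. -/
def SrcIdx (m : ℕ) (K : Finset (Fin m) → Prop) : Type :=
  {p : Finset (Fin m) × Finset (Fin m) // K p.1 ∧ p.1 ⊆ p.2}

/-- The ℤ-module `⊕_{ω⊆[m]} C̃*(K_ω)`. -/
abbrev Src (m : ℕ) (K : Finset (Fin m) → Prop) : Type := SrcIdx m K →₀ ℤ

/-- The simplicial coboundary on the basis element `σ* ∈ C̃*(K_ω)` (orientations from
the natural order of the vertices): `δ σ* = Σ_{v ∈ ω∖σ, σ∪v ∈ K} (−1)^{|{j∈σ : j<v}|} (σ∪v)*`. -/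
def srcDeltaBasis (m : ℕ) (K : Finset (Fin m) → Prop) (p : SrcIdx m K) : Src m K :=
  ∑ v ∈ (p.1.2 \ p.1.1).attach,
    if h : K (insert v.1 p.1.1) then
      Finsupp.single
        ⟨(insert v.1 p.1.1, p.1.2),
          ⟨h, Finset.insert_subset_iff.mpr
            ⟨(Finset.mem_sdiff.mp v.2).1, p.2.2⟩⟩⟩
        ((-1 : ℤ) ^ ((p.1.1.filter (· < v.1)).card))
    else 0

/-- The simplicial coboundary `δ` on `⊕_ω C̃*(K_ω)`, extended linearly. -/
def srcDelta (m : ℕ) (K : Finset (Fin m) → Prop) (x : Src m K) : Src m K :=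
  x.sum fun p c => c • srcDeltaBasis m K p

/-- The map `⊕_ω C̃*(K_ω) → R_K` sending `σ* ∈ C̃*(K_ω)` to `u_σ t_{ω∖σ}`. -/
def Phi (m : ℕ) (K : Finset (Fin m) → Prop) (x : Src m K) : RK m K :=
  x.sum fun p c => c • (uProdK m K p.1.1 * tProdK m K (p.1.2 \ p.1.1))

namespace RKAux

variable {m : ℕ} {K : Finset (Fin m) → Prop}

/-- list product of u's -/
def lU (m : ℕ) (K : Finset (Fin m) → Prop) (L : List (Fin m)) : RK m K :=
  (L.map (uqK m K)).prod
def lT (m : ℕ) (K : Finset (Fin m) → Prop) (L : List (Fin m)) : RK m K :=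
  (L.map (tqK m K)).prod

lemma lU_nil : lU m K [] = 1 := rfl
lemma lU_cons (x : Fin m) (L : List (Fin m)) :
    lU m K (x :: L) = uqK m K x * lU m K L := by simp [lU]
lemma lT_nil : lT m K [] = 1 := rfl
lemma lT_cons (x : Fin m) (L : List (Fin m)) :
    lT m K (x :: L) = tqK m K x * lT m K L := by simp [lT]
lemma lU_append (L₁ L₂ : List (Fin m)) :
    lU m K (L₁ ++ L₂) = lU m K L₁ * lU m K L₂ := by simp [lU]

lemma uProdK_eq_lU (σ : Finset (Fin m)) : uProdK m K σ = lU m K (σ.sort (· ≤ ·)) := rfl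
lemma tProdK_eq_lT (τ : Finset (Fin m)) : tProdK m K τ = lT m K (τ.sort (· ≤ ·)) := rfl

lemma rneg_mul (a b : RK m K) : -a * b = -(a * b) := neg_mul a b
lemma rmul_neg (a b : RK m K) : a * -b = -(a * b) := mul_neg a b
lemma rneg_zero : -(0 : RK m K) = 0 := neg_zero
lemma rneg_one_smul (a : RK m K) : (-1 : ℤ) • a = -a := neg_one_smul ℤ a
lemma rsmul_mul (c : ℤ) (a b : RK m K) : (c • a) * b = c • (a * b) := smul_mul_assoc c a b
lemma rmul_smul (c : ℤ) (a b : RK m K) : a * (c • b) = c • (a * b) := mul_smul_comm c a b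
lemma rsmul_smul (c d : ℤ) (a : RK m K) : c • d • a = (c * d) • a := (mul_smul c d a).symm
lemma rsmul_zero (c : ℤ) : c • (0 : RK m K) = 0 := smul_zero c
lemma rneg_smul (c : ℤ) (a : RK m K) : (-c) • a = -(c • a) := neg_smul c a

lemma rk_rel {a b : FA m} (h : RKRel m K a b) :
    RingQuot.mkRingHom (RKRel m K) a = RingQuot.mkRingHom (RKRel m K) b :=
  RingQuot.mkRingHom_rel h

lemma ut_same (i : Fin m) : uqK m K i * tqK m K i = uqK m K i := by
  simpa [uqK, tqK, map_mul] using rk_rel (RKRel.ut_same (K := K) i)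
lemma tu_same (i : Fin m) : tqK m K i * uqK m K i = 0 := by
  simpa [uqK, tqK, map_mul] using rk_rel (RKRel.tu_same (K := K) i)
lemma ut_comm {i j : Fin m} (h : i ≠ j) :
    uqK m K i * tqK m K j = tqK m K j * uqK m K i := by
  simpa [uqK, tqK, map_mul] using rk_rel (RKRel.ut_comm (K := K) h)
lemma tt_same (i : Fin m) : tqK m K i * tqK m K i = tqK m K i := by
  simpa [uqK, tqK, map_mul] using rk_rel (RKRel.tt_same (K := K) i)
lemma uu_same (i : Fin m) : uqK m K i * uqK m K i = 0 := by
  simpa [uqK, tqK, map_mul] using rk_rel (RKRel.uu_same (K := K) i)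
lemma uu_anti {i j : Fin m} (h : i ≠ j) :
    uqK m K i * uqK m K j = -(uqK m K j * uqK m K i) := by
  simpa [uqK, tqK, map_mul] using rk_rel (RKRel.uu_anti (K := K) h)
lemma tt_comm (i j : Fin m) : tqK m K i * tqK m K j = tqK m K j * tqK m K i := by
  simpa [uqK, tqK, map_mul] using rk_rel (RKRel.tt_comm (K := K) i j)

lemma uProdK_mk (σ : Finset (Fin m)) :
    uProdK m K σ = RingQuot.mkRingHom (RKRel m K) (ufProd m σ) := by
  simp only [uProdK, ufProd, map_list_prod, List.map_map]
  rfl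

lemma uProdK_notface {σ : Finset (Fin m)} (h : ¬ K σ) : uProdK m K σ = 0 := by
  rw [uProdK_mk]
  simpa using rk_rel (RKRel.notface σ h)

/-- t_i commutes past a u-list not containing i -/
lemma t_mul_lU_comm {i : Fin m} {L : List (Fin m)} (h : i ∉ L) :
    tqK m K i * lU m K L = lU m K L * tqK m K i := by
  induction L with
  | nil => simp [lU_nil]
  | cons x L ih =>
    have hx : x ≠ i := fun hxi => h (hxi ▸ List.mem_cons_self (a := x) (l := L))
    have h' : i ∉ L := fun hm => h (List.mem_cons_of_mem _ hm)
    rw [lU_cons, ← mul_assoc, ← ut_comm hx, mul_assoc, ih h', ← mul_assoc, mul_assoc]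

lemma t_mul_lU_of_mem {i : Fin m} {L : List (Fin m)} (h : i ∈ L) :
    tqK m K i * lU m K L = 0 := by
  induction L with
  | nil => simp at h
  | cons x L ih =>
    rw [lU_cons, ← mul_assoc]
    by_cases hx : x = i
    · subst hx; rw [tu_same, zero_mul]
    · have h' : i ∈ L := by
        rcases List.mem_cons.mp h with h1 | h1
        · exact absurd h1.symm hx
        · exact h1
      rw [← ut_comm hx, mul_assoc, ih h', mul_zero]

lemma u_mul_lU_of_mem {i : Fin m} {L : List (Fin m)} (h : i ∈ L) :
    uqK m K i * lU m K L = 0 := by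
  induction L with
  | nil => simp at h
  | cons x L ih =>
    rw [lU_cons, ← mul_assoc]
    by_cases hx : x = i
    · subst hx; rw [uu_same, zero_mul]
    · have h' : i ∈ L := by
        rcases List.mem_cons.mp h with h1 | h1
        · exact absurd h1.symm hx
        · exact h1
      rw [uu_anti (fun hh => hx hh.symm), rneg_mul, mul_assoc, ih h', mul_zero, rneg_zero]

lemma lU_of_not_nodup {L : List (Fin m)} (h : ¬ L.Nodup) : lU m K L = 0 := by
  induction L with
  | nil => exact absurd List.nodup_nil h
  | cons x L ih =>
    by_cases hx : x ∈ L
    · rw [lU_cons]; exact u_mul_lU_of_mem hx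
    · by_cases hL : L.Nodup
      · exact absurd (List.nodup_cons.mpr ⟨hx, hL⟩) h
      · rw [lU_cons, ih hL, mul_zero]

lemma lU_mul_t_of_mem {i : Fin m} {L : List (Fin m)} (h : i ∈ L) :
    lU m K L * tqK m K i = lU m K L := by
  induction L with
  | nil => simp at h
  | cons x L ih =>
    by_cases h' : i ∈ L
    · rw [lU_cons, mul_assoc, ih h']
    · have hx : x = i := by
        rcases List.mem_cons.mp h with h1 | h1
        · exact h1.symm
        · exact absurd h1 h'
      subst hx
      rw [lU_cons, mul_assoc, ← t_mul_lU_comm h', ← mul_assoc, ut_same]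

/-- anticommute u_v past a u-list avoiding v -/
lemma lU_mul_u_anti {v : Fin m} {L : List (Fin m)} (h : v ∉ L) :
    lU m K L * uqK m K v = ((-1 : ℤ) ^ L.length) • (uqK m K v * lU m K L) := by
  induction L with
  | nil => simp [lU_nil]
  | cons x L ih =>
    have hx : x ≠ v := fun hxv => h (hxv ▸ List.mem_cons_self (a := x) (l := L))
    have h' : v ∉ L := fun hm => h (List.mem_cons_of_mem _ hm)
    rw [lU_cons, mul_assoc, ih h', rmul_smul, ← mul_assoc, uu_anti hx,
      List.length_cons, pow_succ, ← rsmul_smul, rneg_mul, rneg_one_smul]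
    rw [mul_assoc]


/-- decomposition when inserting a minimal element -/
lemma uProdK_insert_min {a : Fin m} {s : Finset (Fin m)} (h1 : ∀ b ∈ s, a ≤ b) (h2 : a ∉ s) :
    uProdK m K (insert a s) = uqK m K a * uProdK m K s := by
  rw [uProdK_eq_lU, Finset.sort_insert (· ≤ ·) h1 h2, lU_cons, ← uProdK_eq_lU]

lemma tProdK_insert_min {a : Fin m} {s : Finset (Fin m)} (h1 : ∀ b ∈ s, a ≤ b) (h2 : a ∉ s) :
    tProdK m K (insert a s) = tqK m K a * tProdK m K s := by
  rw [tProdK_eq_lT, Finset.sort_insert (· ≤ ·) h1 h2, lT_cons, ← tProdK_eq_lT]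

lemma min_decomp {ρ : Finset (Fin m)} (h : ρ.Nonempty) :
    ρ = insert (ρ.min' h) (ρ.erase (ρ.min' h)) :=
  (Finset.insert_erase (ρ.min'_mem h)).symm

lemma uProdK_min_decomp {ρ : Finset (Fin m)} (h : ρ.Nonempty) :
    uProdK m K ρ = uqK m K (ρ.min' h) * uProdK m K (ρ.erase (ρ.min' h)) := by
  conv_lhs => rw [min_decomp h]
  exact uProdK_insert_min (fun b hb => ρ.min'_le b (Finset.mem_of_mem_erase hb))
    (Finset.notMem_erase _ _)

lemma tProdK_min_decomp {ρ : Finset (Fin m)} (h : ρ.Nonempty) :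
    tProdK m K ρ = tqK m K (ρ.min' h) * tProdK m K (ρ.erase (ρ.min' h)) := by
  conv_lhs => rw [min_decomp h]
  exact tProdK_insert_min (fun b hb => ρ.min'_le b (Finset.mem_of_mem_erase hb))
    (Finset.notMem_erase _ _)

lemma uProdK_empty : uProdK m K ∅ = 1 := by simp [uProdK]
lemma tProdK_empty : tProdK m K ∅ = 1 := by simp [tProdK]
lemma uProdK_singleton (i : Fin m) : uProdK m K {i} = uqK m K i := by
  simp [uProdK, Finset.sort_singleton]
lemma tProdK_singleton (i : Fin m) : tProdK m K {i} = tqK m K i := by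
  simp [tProdK, Finset.sort_singleton]

/-- `t_i * t_ρ = t_{insert i ρ}` -/
lemma t_mul_tProdK (i : Fin m) (ρ : Finset (Fin m)) :
    tqK m K i * tProdK m K ρ = tProdK m K (insert i ρ) := by
  induction ρ using Finset.strongInduction with
  | _ ρ ih =>
    by_cases hne : ρ.Nonempty
    · set a := ρ.min' hne with ha
      by_cases hi : i ∈ ρ
      · rw [Finset.insert_eq_self.mpr hi]
        by_cases hia : i = a
        · subst hia
          rw [tProdK_min_decomp hne, ← mul_assoc, tt_same]
        · have hi' : i ∈ ρ.erase a := Finset.mem_erase.mpr ⟨hia, hi⟩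
          rw [tProdK_min_decomp hne, ← mul_assoc, tt_comm, mul_assoc,
            ih _ (Finset.erase_ssubset (ρ.min'_mem hne)), Finset.insert_eq_self.mpr hi',
            ← tProdK_min_decomp hne]
      · by_cases hmin : ∀ b ∈ ρ, i ≤ b
        · exact (tProdK_insert_min hmin hi).symm
        · push_neg at hmin
          have hane : a ∈ ρ := ρ.min'_mem hne
          have hai : a ≠ i := fun h => hi (h ▸ hane)
          have hlt : a < i := by
            obtain ⟨b, hb, hbi⟩ := hmin
            exact lt_of_le_of_lt (ρ.min'_le b hb) hbi
          rw [tProdK_min_decomp hne, ← mul_assoc, tt_comm, mul_assoc,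
            ih _ (Finset.erase_ssubset hane)]
          have h1 : ∀ b ∈ insert i (ρ.erase a), a ≤ b := by
            intro b hb
            rcases Finset.mem_insert.mp hb with hb | hb
            · exact hb ▸ hlt.le
            · exact ρ.min'_le b (Finset.mem_of_mem_erase hb)
          have h2 : a ∉ insert i (ρ.erase a) := by
            simp [Finset.mem_insert, hai, Finset.notMem_erase]
          rw [← tProdK_insert_min h1 h2]
          congr 1
          rw [Finset.insert_comm, Finset.insert_erase hane]
    · rw [Finset.not_nonempty_iff_eq_empty.mp hne]
      simp [tProdK_empty, tProdK_singleton]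
  termination_by ρ => ρ

/-- `u_σ * t_i = u_σ` when `i ∈ σ` -/
lemma uProdK_mul_t_of_mem {i : Fin m} {σ : Finset (Fin m)} (h : i ∈ σ) :
    uProdK m K σ * tqK m K i = uProdK m K σ :=
  lU_mul_t_of_mem ((Finset.mem_sort (· ≤ ·)).mpr h)

/-- absorption: `u_σ t_ρ = u_σ t_{ρ \ σ}` -/
lemma absorb (σ ρ : Finset (Fin m)) :
    uProdK m K σ * tProdK m K ρ = uProdK m K σ * tProdK m K (ρ \ σ) := by
  induction ρ using Finset.strongInduction with
  | _ ρ ih =>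
    by_cases hd : Disjoint σ ρ
    · rw [Finset.sdiff_eq_self_of_disjoint hd.symm]
    · obtain ⟨i, hiσ, hiρ⟩ := Finset.not_disjoint_iff.mp hd
      have : tProdK m K ρ = tqK m K i * tProdK m K (ρ.erase i) := by
        rw [t_mul_tProdK, Finset.insert_erase hiρ]
      rw [this, ← mul_assoc, uProdK_mul_t_of_mem hiσ, ih _ (Finset.erase_ssubset hiρ)]
      congr 2
      ext x
      simp only [Finset.mem_sdiff, Finset.mem_erase]
      constructor
      · rintro ⟨⟨-, h1⟩, h2⟩; exact ⟨h1, h2⟩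
      · rintro ⟨h1, h2⟩; exact ⟨⟨fun he => h2 (he ▸ hiσ), h1⟩, h2⟩
  termination_by ρ => ρ

lemma filter_sort_length (σ : Finset (Fin m)) (p : Fin m → Prop) [DecidablePred p] :
    ((σ.sort (· ≤ ·)).filter (fun x => p x)).length = (σ.filter p).card := by
  have h1 : ((σ.sort (· ≤ ·)).filter (fun x => p x) : Multiset (Fin m))
      = σ.val.filter p := by
    rw [← Multiset.filter_coe, Finset.sort_eq]
  have := congrArg Multiset.card h1
  rw [show (σ.filter p).card = Multiset.card (σ.val.filter p) from rfl]
  simpa using this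

/-- sign lemma: append `u_v` on the right of `u_σ` -/
lemma uProdK_mul_u_sign {v : Fin m} {σ : Finset (Fin m)} (h : v ∉ σ) :
    uProdK m K σ * uqK m K v
      = ((-1 : ℤ) ^ ((σ.filter (fun x => v < x)).card)) • uProdK m K (insert v σ) := by
  induction σ using Finset.strongInduction with
  | _ σ ih =>
    by_cases hmin : ∀ b ∈ σ, v ≤ b
    · have hfilt : σ.filter (fun x => v < x) = σ := by
        apply Finset.filter_true_of_mem
        intro x hx
        exact lt_of_le_of_ne (hmin x hx) (fun he => h (he ▸ hx))
      have hlen : ((σ.sort (· ≤ ·)).length) = σ.card := Finset.length_sort _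
      rw [hfilt, uProdK_insert_min hmin h, ← hlen]
      exact lU_mul_u_anti (fun hm => h ((Finset.mem_sort _).mp hm))
    · push_neg at hmin
      have hne : σ.Nonempty := by
        obtain ⟨b, hb, -⟩ := hmin
        exact ⟨b, hb⟩
      set a := σ.min' hne with ha
      have haσ : a ∈ σ := σ.min'_mem hne
      have hav : a < v := by
        obtain ⟨b, hb, hbv⟩ := hmin
        exact lt_of_le_of_lt (σ.min'_le b hb) hbv
      have hanv : a ≠ v := ne_of_lt hav
      have hvσ' : v ∉ σ.erase a := fun hm => h (Finset.mem_of_mem_erase hm)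
      rw [uProdK_min_decomp hne, mul_assoc, ih _ (Finset.erase_ssubset haσ) hvσ', rmul_smul]
      have h1 : ∀ b ∈ insert v (σ.erase a), a ≤ b := by
        intro b hb
        rcases Finset.mem_insert.mp hb with hb | hb
        · exact hb ▸ hav.le
        · exact σ.min'_le b (Finset.mem_of_mem_erase hb)
      have h2 : a ∉ insert v (σ.erase a) := by
        simp [Finset.mem_insert, hanv, Finset.notMem_erase]
      rw [← uProdK_insert_min h1 h2]
      have hset : insert a (insert v (σ.erase a)) = insert v σ := by
        rw [Finset.insert_comm, Finset.insert_erase haσ]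
      rw [hset]
      congr 2
      have : σ.filter (fun x => v < x) = (σ.erase a).filter (fun x => v < x) := by
        conv_lhs => rw [← Finset.insert_erase haσ]
        rw [Finset.filter_insert]
        simp [not_lt_of_gt hav, lt_asymm hav]
      rw [this]

lemma uProdK_mul_u_of_mem {v : Fin m} {σ : Finset (Fin m)} (h : v ∈ σ) :
    uProdK m K σ * uqK m K v = 0 := by
  have h1 : uProdK m K σ * uqK m K v = lU m K (σ.sort (· ≤ ·) ++ [v]) := by
    rw [lU_append]
    simp only [lU, List.map_cons, List.map_nil, List.prod_cons, List.prod_nil, mul_one]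
    rfl
  rw [h1]
  apply lU_of_not_nodup
  intro hnd
  exact (List.disjoint_of_nodup_append hnd) ((Finset.mem_sort (· ≤ ·)).mpr h)
    (List.mem_singleton_self v)

/-- existential sign lemma for multiplying by a u-list -/
lemma uProdK_mul_lU (L : List (Fin m)) (σ : Finset (Fin m)) :
    ∃ c : ℤ, uProdK m K σ * lU m K L = c • uProdK m K (σ ∪ L.toFinset) := by
  induction L generalizing σ with
  | nil => exact ⟨1, by simp [lU_nil]⟩
  | cons x L ih =>
    rw [lU_cons, ← mul_assoc]
    by_cases hx : x ∈ σ
    · exact ⟨0, by rw [uProdK_mul_u_of_mem hx, zero_mul]; simp⟩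
    · obtain ⟨c, hc⟩ := ih (insert x σ)
      refine ⟨(-1 : ℤ) ^ ((σ.filter (fun y => x < y)).card) * c, ?_⟩
      rw [uProdK_mul_u_sign hx, rsmul_mul, hc, rsmul_smul]
      congr 2
      rw [List.toFinset_cons, Finset.insert_union, Finset.union_insert]

lemma lT_mul_u_comm {x : Fin m} {L : List (Fin m)} (h : x ∉ L) :
    lT m K L * uqK m K x = uqK m K x * lT m K L := by
  induction L with
  | nil => simp [lT_nil]
  | cons y L ih =>
    have hy : x ≠ y := fun he => h (he ▸ List.mem_cons_self (a := y) (l := L))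
    have hm' : x ∉ L := fun hh => h (List.mem_cons_of_mem _ hh)
    rw [lT_cons, mul_assoc, ih hm', ← mul_assoc, ← ut_comm hy, mul_assoc]

/-- `t_τ` commutes past / kills u-lists -/
lemma tProdK_mul_u_of_mem {x : Fin m} {τ : Finset (Fin m)} (h : x ∈ τ) :
    tProdK m K τ * uqK m K x = 0 := by
  have : ∀ (L : List (Fin m)), x ∈ L → lT m K L * uqK m K x = 0 := by
    intro L
    induction L with
    | nil => simp
    | cons y L ih =>
      intro hm
      by_cases hx : x ∈ L
      · rw [lT_cons, mul_assoc, ih hx, mul_zero]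
      · have hyx : y = x := by
          rcases List.mem_cons.mp hm with h1 | h1
          · exact h1.symm
          · exact absurd h1 hx
        subst hyx
        rw [lT_cons, mul_assoc, lT_mul_u_comm hx, ← mul_assoc, tu_same, zero_mul]
  exact this _ ((Finset.mem_sort (· ≤ ·)).mpr h)

lemma tProdK_mul_u_comm {x : Fin m} {τ : Finset (Fin m)} (h : x ∉ τ) :
    tProdK m K τ * uqK m K x = uqK m K x * tProdK m K τ := by
  have : ∀ (L : List (Fin m)), x ∉ L → lT m K L * uqK m K x = uqK m K x * lT m K L := by
    intro L hL
    exact lT_mul_u_comm hL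
  exact this _ (fun hm => h ((Finset.mem_sort (· ≤ ·)).mp hm))

lemma lT_mul_tProdK (L : List (Fin m)) (ρ : Finset (Fin m)) :
    lT m K L * tProdK m K ρ = tProdK m K (L.toFinset ∪ ρ) := by
  induction L with
  | nil => simp [lT_nil]
  | cons x L ih =>
    rw [lT_cons, mul_assoc, ih, t_mul_tProdK, List.toFinset_cons, Finset.insert_union]

lemma tProdK_mul_tProdK (τ τ' : Finset (Fin m)) :
    tProdK m K τ * tProdK m K τ' = tProdK m K (τ ∪ τ') := by
  have := lT_mul_tProdK (m := m) (K := K) (τ.sort (· ≤ ·)) τ'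
  rwa [Finset.sort_toFinset] at this

lemma tProdK_mul_lU_comm {τ : Finset (Fin m)} {L : List (Fin m)}
    (h : ∀ x ∈ L, x ∉ τ) :
    tProdK m K τ * lU m K L = lU m K L * tProdK m K τ := by
  induction L with
  | nil => simp [lU_nil]
  | cons x L ih =>
    rw [lU_cons, ← mul_assoc, tProdK_mul_u_comm (h x (List.mem_cons_self (a := x) (l := L))), mul_assoc,
      ih (fun y hy => h y (List.mem_cons_of_mem _ hy)), mul_assoc]

lemma tProdK_mul_lU_zero {τ : Finset (Fin m)} {L : List (Fin m)}
    (h : ∃ x ∈ L, x ∈ τ) :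
    tProdK m K τ * lU m K L = 0 := by
  induction L with
  | nil => simp at h
  | cons x L ih =>
    rw [lU_cons, ← mul_assoc]
    by_cases hx : x ∈ τ
    · rw [tProdK_mul_u_of_mem hx, zero_mul]
    · obtain ⟨y, hy, hyτ⟩ := h
      have hyL : y ∈ L := by
        rcases List.mem_cons.mp hy with h1 | h1
        · exact absurd (h1 ▸ hyτ) hx
        · exact h1
      rw [tProdK_mul_u_comm hx, mul_assoc, ih ⟨y, hyL, hyτ⟩, mul_zero]

section Differential

variable (hK : ∀ σ τ : Finset (Fin m), K σ → τ ⊆ σ → K τ) (hKempty : K ∅)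
variable (d : RK m K →+ RK m K)
variable (hd_t : ∀ i, d (tqK m K i) = uqK m K i)
variable (hd_u : ∀ i, d (uqK m K i) = 0)
variable (hd_leibniz : ∀ (k : ℕ) (x y : RK m K), x ∈ degreePart m K k →
      d (x * y) = d x * y + (-1 : ℤ) ^ k • (x * d y))

lemma mem_degreePart (σ τ : Finset (Fin m)) :
    uProdK m K σ * tProdK m K τ ∈ degreePart m K σ.card :=
  Submodule.subset_span ⟨σ, τ, rfl, rfl⟩

lemma uProdK_mem (σ : Finset (Fin m)) : uProdK m K σ ∈ degreePart m K σ.card := by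
  have := mem_degreePart (K := K) σ ∅
  rwa [tProdK_empty, mul_one] at this

lemma one_mem_deg : (1 : RK m K) ∈ degreePart m K 0 := by
  have := uProdK_mem (K := K) ∅
  rwa [uProdK_empty, Finset.card_empty] at this

lemma t_mem_deg (i : Fin m) : tqK m K i ∈ degreePart m K 0 := by
  have := mem_degreePart (K := K) ∅ {i}
  rwa [uProdK_empty, one_mul, tProdK_singleton, Finset.card_empty] at this

lemma u_mem_deg (i : Fin m) : uqK m K i ∈ degreePart m K 1 := by
  have := uProdK_mem (K := K) {i}
  rwa [uProdK_singleton, Finset.card_singleton] at this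

include hd_leibniz in
lemma d_one : d 1 = 0 := by
  have h := hd_leibniz 0 1 1 one_mem_deg
  simp only [mul_one, one_mul, pow_zero, one_smul] at h
  exact add_eq_left.mp h.symm

include hd_u hd_leibniz in
lemma d_lU (L : List (Fin m)) : d (lU m K L) = 0 := by
  induction L with
  | nil => exact d_one d hd_leibniz
  | cons x L ih =>
    rw [lU_cons, hd_leibniz 1 _ _ (u_mem_deg x), hd_u, zero_mul, ih, mul_zero]
    simp

include hd_u hd_leibniz in
lemma d_uProdK (σ : Finset (Fin m)) : d (uProdK m K σ) = 0 :=
  d_lU d hd_u hd_leibniz _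

include hd_t hd_u hd_leibniz in
lemma d_tProdK (τ : Finset (Fin m)) :
    d (tProdK m K τ) = ∑ v ∈ τ, uqK m K v * tProdK m K (τ.erase v) := by
  induction τ using Finset.induction with
  | empty => simp [tProdK_empty, d_one d hd_leibniz]
  | @insert a s ha ih =>
    have hdec : tProdK m K (insert a s) = tqK m K a * tProdK m K s := by
      rw [t_mul_tProdK]
    rw [hdec, hd_leibniz 0 _ _ (t_mem_deg a), hd_t, pow_zero, one_smul, ih,
      Finset.mul_sum, Finset.sum_insert ha]
    congr 1
    · rw [Finset.erase_insert ha]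
    · apply Finset.sum_congr rfl
      intro v hv
      have hav : a ≠ v := fun he => ha (he ▸ hv)
      rw [← mul_assoc, ← ut_comm (fun he => hav he.symm), mul_assoc, t_mul_tProdK]
      congr 2
      exact (Finset.erase_insert_of_ne hav).symm

lemma filter_lt_card_parity {v : Fin m} {σ : Finset (Fin m)} (h : v ∉ σ) :
    (σ.filter (fun x => x < v)).card + (σ.filter (fun x => v < x)).card = σ.card := by
  have h1 : σ.filter (fun x => ¬ x < v) = σ.filter (fun x => v < x) := by
    apply Finset.filter_congr
    intro x hx
    have hxv : x ≠ v := fun he => h (he ▸ hx)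
    simp only [not_lt, eq_iff_iff]
    constructor
    · intro hle; exact lt_of_le_of_ne hle (fun he => hxv he.symm)
    · intro hlt; exact hlt.le
  rw [← h1]
  exact Finset.card_filter_add_card_filter_not _

lemma sign_parity {v : Fin m} {σ : Finset (Fin m)} (h : v ∉ σ) :
    ((-1 : ℤ) ^ σ.card) * (-1 : ℤ) ^ ((σ.filter (fun x => v < x)).card)
      = (-1 : ℤ) ^ ((σ.filter (fun x => x < v)).card) := by
  rw [← filter_lt_card_parity h, pow_add, mul_assoc, ← pow_add]
  have : Even ((σ.filter (fun x => v < x)).card + (σ.filter (fun x => v < x)).card) :=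
    ⟨_, rfl⟩
  rw [this.neg_one_pow, mul_one]

include hd_t hd_u hd_leibniz in
lemma d_mono {σ τ : Finset (Fin m)} (hdisj : Disjoint σ τ) :
    d (uProdK m K σ * tProdK m K τ)
      = ∑ v ∈ τ, ((-1 : ℤ) ^ ((σ.filter (fun x => x < v)).card))
          • (uProdK m K (insert v σ) * tProdK m K (τ.erase v)) := by
  rw [hd_leibniz σ.card _ _ (uProdK_mem σ), d_uProdK d hd_u hd_leibniz, zero_mul, zero_add,
    d_tProdK d hd_t hd_u hd_leibniz, Finset.mul_sum]
  erw [Finset.smul_sum]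
  apply Finset.sum_congr rfl
  intro v hv
  have hvσ : v ∉ σ := fun hm => (Finset.disjoint_left.mp hdisj hm) hv
  rw [← mul_assoc, uProdK_mul_u_sign hvσ, rsmul_mul]
  erw [rsmul_smul]
  rw [sign_parity hvσ]

end Differential

/-! ### A representation of `R_K` used to prove injectivity -/

abbrev MM (m : ℕ) : Type := (Finset (Fin m) × Finset (Fin m)) →₀ ℤ

def uAct (m : ℕ) (K : Finset (Fin m) → Prop) (i : Fin m)
    (p : Finset (Fin m) × Finset (Fin m)) : MM m :=
  if i ∈ p.1 then 0 else if K (insert i p.1) then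
    ((-1 : ℤ) ^ ((p.1.filter (fun x => x < i)).card))
      • Finsupp.single (insert i p.1, p.2.erase i) 1
  else 0

def tAct (m : ℕ) (i : Fin m) (p : Finset (Fin m) × Finset (Fin m)) : MM m :=
  if i ∈ p.1 then 0 else Finsupp.single (p.1, insert i p.2) 1

def Uend (m : ℕ) (K : Finset (Fin m) → Prop) (i : Fin m) : MM m →ₗ[ℤ] MM m :=
  Finsupp.linearCombination ℤ (uAct m K i)
def Tend (m : ℕ) (i : Fin m) : MM m →ₗ[ℤ] MM m :=
  Finsupp.linearCombination ℤ (tAct m i)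

lemma Uend_single (i : Fin m) (p : Finset (Fin m) × Finset (Fin m)) (c : ℤ) :
    Uend m K i (Finsupp.single p c) = c • uAct m K i p :=
  Finsupp.linearCombination_single (R := ℤ) (v := uAct m K i) c p

lemma Tend_single (i : Fin m) (p : Finset (Fin m) × Finset (Fin m)) (c : ℤ) :
    Tend m i (Finsupp.single p c) = c • tAct m i p :=
  Finsupp.linearCombination_single (R := ℤ) (v := tAct m i) c p

def rep (m : ℕ) (K : Finset (Fin m) → Prop) : FA m →ₐ[ℤ] Module.End ℤ (MM m) :=
  FreeAlgebra.lift ℤ (Sum.elim (Uend m K) (Tend m))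

lemma rep_u (i : Fin m) : rep m K (uf m i) = Uend m K i := by
  simp [rep, uf, FreeAlgebra.lift_ι_apply]

lemma rep_t (i : Fin m) : rep m K (tf m i) = Tend m i := by
  simp [rep, tf, FreeAlgebra.lift_ι_apply]

lemma ecard_insert (i j : Fin m) (σ : Finset (Fin m)) (hj : j ∉ σ) :
    ((insert j σ).filter (fun x => x < i)).card
      = (σ.filter (fun x => x < i)).card + (if j < i then 1 else 0) := by
  rw [Finset.filter_insert]
  split_ifs with h
  · rw [Finset.card_insert_of_notMem (fun hm => hj (Finset.mem_of_mem_filter _ hm))]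
  · rw [add_zero]

lemma sign_anti (i j : Fin m) (hij : i ≠ j) (a b : ℕ) :
    ((-1 : ℤ) ^ b) * ((-1 : ℤ) ^ (a + (if j < i then 1 else 0)))
      = -(((-1 : ℤ) ^ a) * ((-1 : ℤ) ^ (b + (if i < j then 1 else 0)))) := by
  rcases lt_or_gt_of_ne hij with h | h
  · rw [if_neg (asymm h), if_pos h, add_zero, pow_add]
    ring
  · rw [if_pos h, if_neg (asymm h), add_zero, pow_add]
    ring

/-- the key existence lemma for words of `Uend`'s -/
lemma Uword_ex (L : List (Fin m)) (p : Finset (Fin m) × Finset (Fin m)) :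
    ∃ (c : ℤ) (q : Finset (Fin m) × Finset (Fin m)),
      ((L.map (Uend m K)).prod) (Finsupp.single p 1) = c • Finsupp.single q 1 ∧
      (c ≠ 0 → (q.1 = L.toFinset ∪ p.1 ∧ (L ≠ [] → K q.1))) := by
  induction L with
  | nil =>
    refine ⟨1, p, by simp, fun _ => ⟨by simp, fun h => absurd rfl h⟩⟩
  | cons i L ih =>
    obtain ⟨c, q, heq, hcond⟩ := ih
    rw [List.map_cons, List.prod_cons, Module.End.mul_apply, heq, map_smul, Uend_single,
      one_smul]
    by_cases hi : i ∈ q.1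
    · exact ⟨0, q, by simp [uAct, hi], fun h => absurd rfl h⟩
    · by_cases hk : K (insert i q.1)
      · refine ⟨c * (-1 : ℤ) ^ ((q.1.filter (fun x => x < i)).card),
          (insert i q.1, q.2.erase i), ?_, ?_⟩
        · rw [uAct, if_neg hi, if_pos hk, mul_smul]
        · intro hc
          have hc' : c ≠ 0 := fun h => hc (by rw [h, zero_mul])
          obtain ⟨hq1, -⟩ := hcond hc'
          constructor
          · rw [hq1, List.toFinset_cons, Finset.insert_union]
          · intro _
            exact hk
      · exact ⟨0, q, by simp [uAct, hi, hk], fun h => absurd rfl h⟩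

lemma rep_word (σ : Finset (Fin m)) :
    rep m K (ufProd m σ) = ((σ.sort (· ≤ ·)).map (Uend m K)).prod := by
  rw [ufProd, map_list_prod, List.map_map]
  congr 1
  apply List.map_congr_left
  intro a _
  exact rep_u a

lemma rep_rel (hK : ∀ σ τ : Finset (Fin m), K σ → τ ⊆ σ → K τ) (hKempty : K ∅) :
    ∀ ⦃a b : FA m⦄, RKRel m K a b → rep m K a = rep m K b := by
  intro a b h
  induction h with
  | ut_same i =>
    rw [map_mul, rep_u, rep_t]
    apply Finsupp.lhom_ext
    intro p c
    rw [Module.End.mul_apply, Tend_single, map_smul, Uend_single]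
    congr 1
    by_cases hi : i ∈ p.1
    · simp [tAct, uAct, hi]
    · simp only [tAct, if_neg hi, Uend_single, one_smul, uAct, if_neg hi,
        Finset.erase_insert_eq_erase]
  | tu_same i =>
    rw [map_mul, rep_u, rep_t, map_zero]
    apply Finsupp.lhom_ext
    intro p c
    rw [Module.End.mul_apply, Uend_single, map_smul]
    by_cases hi : i ∈ p.1
    · simp [uAct, hi]
    · by_cases hk : K (insert i p.1)
      · simp [uAct, hi, hk, Tend_single, tAct]
      · simp [uAct, hi, hk]
  | @ut_comm i j hij =>
    rw [map_mul, map_mul, rep_u, rep_t]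
    apply Finsupp.lhom_ext
    intro p c
    rw [Module.End.mul_apply, Module.End.mul_apply, Tend_single, Uend_single, map_smul, map_smul]
    congr 1
    have hji : j ≠ i := fun h => hij h.symm
    by_cases hj : j ∈ p.1
    · by_cases hi : i ∈ p.1
      · simp [tAct, uAct, hi, hj]
      · by_cases hk : K (insert i p.1)
        · simp [tAct, uAct, hi, hj, hk, Tend_single, Finset.mem_insert, Uend_single]
        · simp [tAct, uAct, hi, hj, hk]
    · by_cases hi : i ∈ p.1
      · simp [tAct, uAct, hi, hj, Uend_single]
      · by_cases hk : K (insert i p.1)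
        · simp only [tAct, if_neg hj, Uend_single, one_smul, uAct, if_neg hi, if_pos hk,
            map_smul, Tend_single]
          have hjmem : j ∉ insert i p.1 := by
            simp only [Finset.mem_insert]
            rintro (h | h)
            · exact hji h
            · exact hj h
          simp only [tAct, if_neg hjmem, one_smul,
            Finset.erase_insert_of_ne hji]
        · simp [tAct, uAct, hi, hj, hk, Uend_single]
  | tt_same i =>
    rw [map_mul, rep_t]
    apply Finsupp.lhom_ext
    intro p c
    rw [Module.End.mul_apply, Tend_single, map_smul]
    congr 1
    by_cases hi : i ∈ p.1 <;> simp [tAct, hi, Tend_single, Finset.insert_idem]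
  | uu_same i =>
    rw [map_mul, rep_u, map_zero]
    apply Finsupp.lhom_ext
    intro p c
    rw [Module.End.mul_apply, Uend_single, map_smul]
    by_cases hi : i ∈ p.1
    · simp [uAct, hi]
    · by_cases hk : K (insert i p.1)
      · simp [uAct, hi, hk, Uend_single]
      · simp [uAct, hi, hk]
  | @uu_anti i j hij =>
    rw [map_mul, map_neg, map_mul, rep_u, rep_u]
    apply Finsupp.lhom_ext
    intro p c
    rw [Module.End.mul_apply, LinearMap.neg_apply, Module.End.mul_apply, Uend_single,
      Uend_single, map_smul, map_smul, ← smul_neg]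
    congr 1
    have hji : j ≠ i := fun h => hij h.symm
    by_cases hj : j ∈ p.1
    · by_cases hi : i ∈ p.1
      · simp [uAct, hi, hj]
      · by_cases hk : K (insert i p.1)
        · simp [uAct, hi, hj, hk, Uend_single, Finset.mem_insert]
        · simp [uAct, hi, hj, hk]
    · by_cases hi : i ∈ p.1
      · by_cases hk : K (insert j p.1)
        · simp [uAct, hi, hj, hk, Uend_single, Finset.mem_insert]
        · simp [uAct, hi, hj, hk]
      · have hii : i ∉ insert j p.1 := by
          simp only [Finset.mem_insert]
          rintro (h | h)
          · exact hij h
          · exact hi h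
        have hjj : j ∉ insert i p.1 := by
          simp only [Finset.mem_insert]
          rintro (h | h)
          · exact hji h
          · exact hj h
        by_cases hF : K (insert i (insert j p.1))
        · have hF' : K (insert j (insert i p.1)) := by
            rwa [Finset.insert_comm]
          have hki : K (insert i p.1) := hK _ _ hF' (Finset.subset_insert _ _)
          have hkj : K (insert j p.1) := hK _ _ hF (Finset.subset_insert _ _)
          rw [uAct, if_neg hj, if_pos hkj, map_smul, Uend_single, one_smul, uAct,
            if_neg hii, if_pos hF, uAct, if_neg hi, if_pos hki, map_smul, Uend_single,
            one_smul, uAct, if_neg hjj, if_pos hF']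
          dsimp only
          rw [smul_smul, smul_smul, ecard_insert i j p.1 hj, ecard_insert j i p.1 hi,
            Finset.insert_comm j i p.1, Finset.erase_right_comm (a := i) (b := j),
            ← neg_smul]
          congr 1
          exact sign_anti i j hij _ _
        · have hF' : ¬ K (insert j (insert i p.1)) := by
            rw [Finset.insert_comm]; exact hF
          by_cases hkj : K (insert j p.1) <;> by_cases hki : K (insert i p.1) <;>
            simp [uAct, hi, hj, hii, hjj, hkj, hki, hF, hF', Uend_single]
  | tt_comm i j =>
    rw [map_mul, map_mul, rep_t, rep_t]
    apply Finsupp.lhom_ext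
    intro p c
    rw [Module.End.mul_apply, Module.End.mul_apply, Tend_single, Tend_single, map_smul, map_smul]
    congr 1
    by_cases hj : j ∈ p.1 <;> by_cases hi : i ∈ p.1 <;>
      simp [tAct, hi, hj, Tend_single, Finset.insert_comm]
  | notface σ hσ =>
    rw [rep_word, map_zero]
    apply Finsupp.lhom_ext
    intro p c
    have hsingle : (Finsupp.single p c : MM m) = c • Finsupp.single p 1 := by
      rw [Finsupp.smul_single, smul_eq_mul, mul_one]
    rw [hsingle, map_smul]
    obtain ⟨c', q, heq, hcond⟩ := Uword_ex (K := K) (σ.sort (· ≤ ·)) p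
    rw [heq]
    have hc' : c' = 0 := by
      by_contra hc
      obtain ⟨hq1, hq2⟩ := hcond hc
      have hne : σ.sort (· ≤ ·) ≠ [] := by
        intro hnil
        have : σ = ∅ := by
          have h2 := Finset.sort_toFinset σ (· ≤ ·)
          rw [hnil] at h2
          simpa using h2.symm
        exact hσ (this ▸ hKempty)
      have hkq : K q.1 := hq2 hne
      rw [hq1, Finset.sort_toFinset] at hkq
      exact hσ (hK _ _ hkq Finset.subset_union_left)
    rw [hc']
    simp

section Quot

variable (hK : ∀ σ τ : Finset (Fin m), K σ → τ ⊆ σ → K τ) (hKempty : K ∅)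

def repQ : RK m K →ₐ[ℤ] Module.End ℤ (MM m) :=
  RingQuot.liftAlgHom ℤ ⟨rep m K, rep_rel hK hKempty⟩

lemma repQ_mk (a : FA m) :
    repQ hK hKempty (RingQuot.mkRingHom (RKRel m K) a) = rep m K a := by
  have h1 : RingQuot.mkRingHom (RKRel m K) a = RingQuot.mkAlgHom ℤ (RKRel m K) a := by
    rw [← RingQuot.mkAlgHom_coe ℤ (RKRel m K)]
    rfl
  rw [h1]
  exact RingQuot.liftAlgHom_mkAlgHom_apply ℤ (rep m K) (rep_rel hK hKempty) a

lemma repQ_u (i : Fin m) : repQ hK hKempty (uqK m K i) = Uend m K i := by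
  rw [uqK, repQ_mk, rep_u]

lemma repQ_t (i : Fin m) : repQ hK hKempty (tqK m K i) = Tend m i := by
  rw [tqK, repQ_mk, rep_t]

lemma repQ_lU (L : List (Fin m)) :
    repQ hK hKempty (lU m K L) = ((L.map (Uend m K)).prod) := by
  rw [lU, map_list_prod, List.map_map]
  congr 1
  apply List.map_congr_left
  intro a _
  exact repQ_u hK hKempty a

lemma repQ_lT (L : List (Fin m)) :
    repQ hK hKempty (lT m K L) = ((L.map (Tend m)).prod) := by
  rw [lT, map_list_prod, List.map_map]
  congr 1
  apply List.map_congr_left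
  intro a _
  exact repQ_t hK hKempty a

lemma Tword (L : List (Fin m)) (ρ : Finset (Fin m)) :
    ((L.map (Tend m)).prod) (Finsupp.single ((∅ : Finset (Fin m)), ρ) 1)
      = Finsupp.single ((∅ : Finset (Fin m)), L.toFinset ∪ ρ) 1 := by
  induction L generalizing ρ with
  | nil => simp
  | cons x L ih =>
    rw [List.map_cons, List.prod_cons, Module.End.mul_apply, ih, Tend_single, one_smul,
      tAct, if_neg (Finset.notMem_empty x), List.toFinset_cons, Finset.insert_union]

include hK in
lemma Uword (L : List (Fin m)) (hs : List.Pairwise (· < ·) L) (hkL : K L.toFinset)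
    (ρ : Finset (Fin m)) :
    ((L.map (Uend m K)).prod) (Finsupp.single ((∅ : Finset (Fin m)), ρ) 1)
      = Finsupp.single (L.toFinset, ρ \ L.toFinset) 1 := by
  induction L generalizing ρ with
  | nil => simp
  | cons i L ih =>
    have hs' : List.Pairwise (· < ·) L := hs.of_cons
    have hlt : ∀ b ∈ L, i < b := fun b hb => List.rel_of_pairwise_cons hs hb
    have hiL : i ∉ L := fun hm => lt_irrefl i (hlt i hm)
    have hsub : L.toFinset ⊆ (i :: L).toFinset := by
      rw [List.toFinset_cons]
      exact Finset.subset_insert _ _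
    have hkL' : K L.toFinset := hK _ _ hkL hsub
    rw [List.map_cons, List.prod_cons, Module.End.mul_apply, ih hs' hkL', Uend_single,
      one_smul, uAct]
    have hi1 : i ∉ L.toFinset := fun hm => hiL (List.mem_toFinset.mp hm)
    rw [if_neg hi1]
    have hk2 : K (insert i L.toFinset) := by
      rwa [← List.toFinset_cons]
    rw [if_pos hk2]
    have hfilt : L.toFinset.filter (fun x => x < i) = ∅ := by
      apply Finset.filter_eq_empty_iff.mpr
      intro b hb
      exact not_lt_of_gt (hlt b (List.mem_toFinset.mp hb))
    rw [hfilt, Finset.card_empty, pow_zero, one_smul, List.toFinset_cons,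
      ← Finset.sdiff_insert]

include hK in
lemma ev_mono {σ τ : Finset (Fin m)} (hσ : K σ) (hdisj : Disjoint σ τ) :
    (repQ hK hKempty (uProdK m K σ * tProdK m K τ))
        (Finsupp.single ((∅ : Finset (Fin m)), (∅ : Finset (Fin m))) 1)
      = Finsupp.single (σ, τ) 1 := by
  rw [map_mul, Module.End.mul_apply, uProdK_eq_lU, tProdK_eq_lT, repQ_lU, repQ_lT,
    Tword, Finset.sort_toFinset, Finset.union_empty,
    Uword hK _ (Finset.sortedLT_sort σ).pairwise (by rwa [Finset.sort_toFinset]),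
    Finset.sort_toFinset, Finset.sdiff_eq_self_of_disjoint hdisj.symm]

end Quot

/-! ### spanning -/

def fMon (m : ℕ) (K : Finset (Fin m) → Prop) (p : SrcIdx m K) : RK m K :=
  uProdK m K p.1.1 * tProdK m K (p.1.2 \ p.1.1)

lemma mono_mem_span {σ τ : Finset (Fin m)} (hσ : K σ) (hdisj : Disjoint σ τ) :
    uProdK m K σ * tProdK m K τ ∈ Submodule.span ℤ (Set.range (fMon m K)) := by
  apply Submodule.subset_span
  refine ⟨⟨(σ, σ ∪ τ), hσ, Finset.subset_union_left⟩, ?_⟩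
  simp only [fMon]
  rw [Finset.union_sdiff_cancel_left hdisj]

lemma anyMono_mem_span (σ τ : Finset (Fin m)) :
    uProdK m K σ * tProdK m K τ ∈ Submodule.span ℤ (Set.range (fMon m K)) := by
  by_cases hσ : K σ
  · rw [absorb]
    exact mono_mem_span hσ Finset.disjoint_sdiff
  · rw [uProdK_notface hσ, zero_mul]
    exact Submodule.zero_mem _

lemma span_mul_mem (hK : ∀ σ τ : Finset (Fin m), K σ → τ ⊆ σ → K τ)
    {x y : RK m K} (hx : x ∈ Submodule.span ℤ (Set.range (fMon m K)))
    (hy : y ∈ Submodule.span ℤ (Set.range (fMon m K))) :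
    x * y ∈ Submodule.span ℤ (Set.range (fMon m K)) := by
  induction hx using Submodule.span_induction with
  | zero => rw [zero_mul]; exact Submodule.zero_mem _
  | add a b ha hb iha ihb => rw [add_mul]; exact Submodule.add_mem _ iha ihb
  | smul c a ha iha => rw [smul_mul_assoc]; exact Submodule.smul_mem _ c iha
  | mem a ha =>
    induction hy using Submodule.span_induction with
    | zero => rw [mul_zero]; exact Submodule.zero_mem _
    | add a' b' ha' hb' iha ihb => rw [mul_add]; exact Submodule.add_mem _ iha ihb
    | smul c a' ha' iha => rw [mul_smul_comm]; exact Submodule.smul_mem _ c iha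
    | mem b hb =>
      obtain ⟨p, rfl⟩ := ha
      obtain ⟨q, rfl⟩ := hb
      obtain ⟨⟨σ, ω⟩, hσ, hsub⟩ := p
      obtain ⟨⟨σ', ω'⟩, hσ', hsub'⟩ := q
      simp only [fMon]
      set τ := ω \ σ with hτ
      set τ' := ω' \ σ' with hτ'
      set L := σ'.sort (· ≤ ·) with hL
      have hLU : uProdK m K σ' = lU m K L := rfl
      rw [hLU]
      by_cases hcross : ∃ x ∈ L, x ∈ τ
      · rw [mul_assoc, ← mul_assoc (tProdK m K τ), tProdK_mul_lU_zero hcross,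
          zero_mul, mul_zero]
        exact Submodule.zero_mem _
      · push_neg at hcross
        rw [mul_assoc, ← mul_assoc (tProdK m K τ), tProdK_mul_lU_comm hcross]
        obtain ⟨c, hc⟩ := uProdK_mul_lU (K := K) L σ
        rw [mul_assoc, ← mul_assoc (uProdK m K σ), hc, rsmul_mul,
          tProdK_mul_tProdK]
        rw [hL, Finset.sort_toFinset]
        exact Submodule.smul_mem _ c (anyMono_mem_span _ _)

end RKAux

/-- eq. (2.4), cf. Cai: for a simplicial complex `K` on `[m]`, the map
`σ* ↦ u_σ t_{ω∖σ}`, summed over all `ω ⊆ [m]`, is a (degree-one-shifting) isomorphism of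
cochain complexes `⊕_{ω⊆[m]} C̃*(K_ω) ≅ R_K`, where `R_K` carries the differential `d`
determined by `d t_i = u_i`, `d u_i = 0` and the graded Leibniz rule. -/
theorem phi_iso_of_cochain_complexes (m : ℕ)
    (K : Finset (Fin m) → Prop)
    (hK : ∀ σ τ, K σ → τ ⊆ σ → K τ)
    (hKempty : K ∅)
    (d : RK m K →+ RK m K)
    (hd_t : ∀ i, d (tqK m K i) = uqK m K i)
    (hd_u : ∀ i, d (uqK m K i) = 0)
    (hd_leibniz : ∀ (k : ℕ) (x y : RK m K), x ∈ degreePart m K k →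
      d (x * y) = d x * y + (-1 : ℤ) ^ k • (x * d y)) :
    Function.Bijective (Phi m K) ∧
    ∀ x : Src m K, Phi m K (srcDelta m K x) = d (Phi m K x) := by
  classical
  have hPhiFun : Phi m K = ⇑(Finsupp.linearCombination ℤ (RKAux.fMon m K)) := by
    funext x
    rw [Finsupp.linearCombination_apply]
    rfl
  have hDeltaFun : srcDelta m K = ⇑(Finsupp.linearCombination ℤ (srcDeltaBasis m K)) := by
    funext x
    rw [Finsupp.linearCombination_apply]
    rfl
  -- the evaluation map used for injectivity
  let ev : RK m K →ₗ[ℤ] RKAux.MM m :=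
    { toFun := fun x => (RKAux.repQ hK hKempty x) (Finsupp.single (∅, ∅) 1)
      map_add' := by
        intro x y
        simp [map_add]
      map_smul' := by
        intro c x
        simp [map_smul] }
  have hg : Function.Injective (fun p : SrcIdx m K => (p.1.1, p.1.2 \ p.1.1)) := by
    intro p q h
    dsimp only at h
    have h1 : p.1.1 = q.1.1 := (Prod.ext_iff.mp h).1
    have h2 : p.1.2 \ p.1.1 = q.1.2 \ q.1.1 := (Prod.ext_iff.mp h).2
    apply Subtype.ext
    apply Prod.ext h1
    have hp := Finset.union_sdiff_of_subset p.2.2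
    have hq := Finset.union_sdiff_of_subset q.2.2
    rw [← hp, ← hq, h2, h1]
  have key : ∀ x : Src m K, ev (Phi m K x)
      = Finsupp.mapDomain (fun p : SrcIdx m K => (p.1.1, p.1.2 \ p.1.1)) x := by
    have hcomp : ev ∘ₗ (Finsupp.linearCombination ℤ (RKAux.fMon m K))
        = Finsupp.lmapDomain ℤ ℤ (fun p : SrcIdx m K => (p.1.1, p.1.2 \ p.1.1)) := by
      apply Finsupp.lhom_ext
      intro p b
      rw [LinearMap.comp_apply, Finsupp.linearCombination_single, map_smul,
        Finsupp.lmapDomain_apply, Finsupp.mapDomain_single]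
      have hev : ev (RKAux.fMon m K p) = Finsupp.single (p.1.1, p.1.2 \ p.1.1) 1 :=
        RKAux.ev_mono hK hKempty p.2.1 Finset.disjoint_sdiff
      rw [hev, Finsupp.smul_single, smul_eq_mul, mul_one]
    intro x
    have := LinearMap.congr_fun hcomp x
    rw [LinearMap.comp_apply, Finsupp.lmapDomain_apply] at this
    rw [hPhiFun]
    exact this
  have main : ∀ p : SrcIdx m K, Phi m K (srcDeltaBasis m K p) = d (RKAux.fMon m K p) := by
    intro p
    have hdisj : Disjoint p.1.1 (p.1.2 \ p.1.1) := Finset.disjoint_sdiff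
    have hRHS : d (RKAux.fMon m K p)
        = ∑ v ∈ p.1.2 \ p.1.1, ((-1 : ℤ) ^ ((p.1.1.filter (fun x => x < v)).card))
            • (uProdK m K (insert v p.1.1) * tProdK m K ((p.1.2 \ p.1.1).erase v)) :=
      RKAux.d_mono d hd_t hd_u hd_leibniz hdisj
    rw [hRHS, srcDeltaBasis, hPhiFun, map_sum]
    have hstep : ∀ v : {x // x ∈ p.1.2 \ p.1.1},
        v ∈ (p.1.2 \ p.1.1).attach →
        (Finsupp.linearCombination ℤ (RKAux.fMon m K))
          (if h : K (insert v.1 p.1.1) then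
            Finsupp.single
              ⟨(insert v.1 p.1.1, p.1.2),
                ⟨h, Finset.insert_subset_iff.mpr
                  ⟨(Finset.mem_sdiff.mp v.2).1, p.2.2⟩⟩⟩
              ((-1 : ℤ) ^ ((p.1.1.filter (· < v.1)).card))
          else 0)
        = (fun w => if K (insert w p.1.1) then
            ((-1 : ℤ) ^ ((p.1.1.filter (fun x => x < w)).card))
              • (uProdK m K (insert w p.1.1) * tProdK m K (p.1.2 \ insert w p.1.1))
          else 0) v.1 := by
      intro v _
      dsimp only
      by_cases hkv : K (insert v.1 p.1.1)
      · rw [dif_pos hkv, if_pos hkv]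
        exact Finsupp.linearCombination_single ..
      · rw [dif_neg hkv, if_neg hkv, map_zero]
    rw [Finset.sum_congr rfl hstep,
      Finset.sum_attach _ (fun w => if K (insert w p.1.1) then
        ((-1 : ℤ) ^ ((p.1.1.filter (fun x => x < w)).card))
          • (uProdK m K (insert w p.1.1) * tProdK m K (p.1.2 \ insert w p.1.1))
        else 0)]
    apply Finset.sum_congr rfl
    intro v hv
    rw [← Finset.sdiff_insert]
    by_cases hkv : K (insert v p.1.1)
    · rw [if_pos hkv]
    · rw [if_neg hkv, RKAux.uProdK_notface hkv, zero_mul]; exact (smul_zero _).symm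
  constructor
  · constructor
    · intro x y hxy
      apply Finsupp.mapDomain_injective hg
      rw [← key, ← key, hxy]
    · intro z
      have hz : z ∈ LinearMap.range (Finsupp.linearCombination ℤ (RKAux.fMon m K)) := by
        rw [Finsupp.range_linearCombination]
        obtain ⟨a, rfl⟩ := RingQuot.mkRingHom_surjective (RKRel m K) z
        induction a using FreeAlgebra.induction with
        | grade0 r =>
          have h1 : (1 : RK m K) ∈ Submodule.span ℤ (Set.range (RKAux.fMon m K)) := by
            have := RKAux.anyMono_mem_span (K := K) ∅ ∅
            rwa [RKAux.uProdK_empty, RKAux.tProdK_empty, one_mul] at this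
          have h2 : RingQuot.mkRingHom (RKRel m K) (algebraMap ℤ (FA m) r)
              = r • (1 : RK m K) := by
            rw [Algebra.algebraMap_eq_smul_one]
            erw [map_zsmul, map_one]
          rw [h2]
          exact Submodule.smul_mem _ r h1
        | grade1 x =>
          cases x with
          | inl i =>
            have := RKAux.anyMono_mem_span (K := K) {i} ∅
            rwa [RKAux.uProdK_singleton, RKAux.tProdK_empty, mul_one] at this
          | inr i =>
            have := RKAux.anyMono_mem_span (K := K) ∅ {i}
            rwa [RKAux.uProdK_empty, RKAux.tProdK_singleton, one_mul] at this
        | mul a b iha ihb =>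
          rw [map_mul]
          exact RKAux.span_mul_mem hK iha ihb
        | add a b iha ihb =>
          rw [map_add]
          exact Submodule.add_mem _ iha ihb
      obtain ⟨x, hx⟩ := hz
      rw [hPhiFun]
      exact ⟨x, hx⟩
  · intro x
    have hcomp2 : (Finsupp.linearCombination ℤ (RKAux.fMon m K)) ∘ₗ
          (Finsupp.linearCombination ℤ (srcDeltaBasis m K))
        = d.toIntLinearMap ∘ₗ (Finsupp.linearCombination ℤ (RKAux.fMon m K)) := by
      apply Finsupp.lhom_ext
      intro p b
      rw [LinearMap.comp_apply, LinearMap.comp_apply, Finsupp.linearCombination_single,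
        Finsupp.linearCombination_single, map_smul, map_smul]
      congr 1
      have := main p
      rw [hPhiFun] at this
      exact this
    have := LinearMap.congr_fun hcomp2 x
    rw [LinearMap.comp_apply, LinearMap.comp_apply] at this
    rw [hPhiFun, hDeltaFun]
    exact this

end
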